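/- Let P > 1 be an integer and μ a probability measure on ℤ. Define α = max over factorizations QR = P with Q > 1 and over ℓ ∈ ℤ/Rℤ of (1/√Q)·∑_{k ∈ ℤ/Qℤ} |μ̂(k/Q + ℓ/R)|, and β = max over k ∈ ℤ/Pℤ with k ≢ 0 (mod P) of |μ̂(k/P)|. If α ≤ 1, then β ≤ 1 - 1/P². -/

import Mathlib

open Complex Real Finset

noncomputable def st2e (x : ℝ) : ℂ := Complex.exp ((2 * π * x : ℝ) * Complex.I)

lemma st2e_norm (x : ℝ) : ‖st2e x‖ = 1 := Complex.norm_exp_ofReal_mul_I _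

lemma st2e_re (x : ℝ) : (st2e x).re = Real.cos (2 * π * x) := Complex.exp_ofReal_mul_I_re _

lemma st2e_add (x y : ℝ) : st2e (x + y) = st2e x * st2e y := by
  unfold st2e; rw [← Complex.exp_add]; congr 1; push_cast; ring

lemma st2e_conj (x : ℝ) : (starRingEnd ℂ) (st2e x) = st2e (-x) := by
  unfold st2e; rw [← Complex.exp_conj]; congr 1
  rw [map_mul, Complex.conj_ofReal, Complex.conj_I]; push_cast; ring

lemma st2e_int (n : ℤ) : st2e n = 1 := by
  unfold st2e
  rw [show ((2 * π * (n:ℝ) : ℝ) : ℂ) * Complex.I = n * (2 * π * Complex.I) by push_cast; ring]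
  exact Complex.exp_int_mul_two_pi_mul_I n

lemma st2e_pow (j : ℕ) (x : ℝ) : st2e (j * x) = st2e x ^ j := by
  unfold st2e
  rw [← Complex.exp_nat_mul]; congr 1; push_cast; ring

lemma st2e_ne_one (Q : ℕ) (hQ : 0 < Q) (n : ℤ) (hn : ¬ (Q:ℤ) ∣ n) :
    st2e ((n:ℝ) / Q) ≠ 1 := by
  intro h
  unfold st2e at h
  rw [Complex.exp_eq_one_iff] at h
  obtain ⟨m, hm⟩ := h
  have hQ0 : (Q:ℂ) ≠ 0 := by exact_mod_cast hQ.ne'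
  have hπ : (π:ℂ) ≠ 0 := by exact_mod_cast Real.pi_ne_zero
  have hI := Complex.I_ne_zero
  have h2 : (n:ℂ) = m * Q := by
    push_cast at hm
    field_simp at hm
    have h3 : (2*(π:ℂ)*Complex.I) * n = (2*(π:ℂ)*Complex.I) * (m*Q) := by
      linear_combination (2*(π:ℂ)*Complex.I) * hm
    exact mul_left_cancel₀ (by simp [hπ, hI, Complex.I_ne_zero] : (2*(π:ℂ)*Complex.I) ≠ 0) h3
  have : n = m * Q := by exact_mod_cast h2
  exact hn ⟨m, by linarith⟩

lemma st2e_geom (Q : ℕ) (hQ : 0 < Q) (n : ℤ) :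
    ∑ j ∈ Finset.range Q, st2e ((n:ℝ) * j / Q) = if (Q:ℤ) ∣ n then (Q:ℂ) else 0 := by
  by_cases h : (Q:ℤ) ∣ n
  · obtain ⟨t, rfl⟩ := h
    rw [if_pos ⟨t, rfl⟩]
    have : ∀ j ∈ Finset.range Q, st2e (((Q:ℤ) * t : ℤ) * (j:ℝ) / Q) = 1 := by
      intro j _
      rw [show (((Q:ℤ) * t : ℤ) : ℝ) * (j:ℝ) / Q = ((t * j : ℤ) : ℝ) by
        push_cast; field_simp]
      exact st2e_int _
    rw [Finset.sum_congr rfl this]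
    simp
  · rw [if_neg h]
    have hterm : ∀ j : ℕ, st2e ((n:ℝ) * j / Q) = st2e ((n:ℝ)/Q) ^ j := by
      intro j
      rw [← st2e_pow]; congr 1; ring
    simp only [hterm]
    rw [geom_sum_eq (st2e_ne_one Q hQ n h)]
    rw [← st2e_pow]
    rw [show (Q:ℝ) * ((n:ℝ)/Q) = ((n:ℤ):ℝ) by field_simp]
    rw [st2e_int]
    simp

lemma st2_sin_lb (Q : ℕ) (hQ : 1 < Q) (s : ℝ) (h1 : 1/Q ≤ s) (h2 : s ≤ 1 - 1/Q) :
    2 / Q ≤ Real.sin (π * s) := by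
  have hQ0 : (0:ℝ) < Q := by positivity
  have hπ := Real.pi_pos
  have key : ∀ y : ℝ, π/Q ≤ y → y ≤ π/2 → 2/Q ≤ Real.sin y := by
    intro y hy1 hy2
    have h0 : 0 ≤ y := le_trans (by positivity) hy1
    have := Real.mul_le_sin h0 hy2
    have h4 : 2/π * (π/Q) ≤ 2/π * y := by
      apply mul_le_mul_of_nonneg_left hy1; positivity
    have h5 : 2/π * (π/Q) = 2/Q := by field_simp
    linarith
  rcases le_or_gt (π * s) (π/2) with hc | hc
  · apply key _ _ hc
    have : π * (1/Q) ≤ π * s := by gcongr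
    have h6 : π * (1/(Q:ℝ)) = π/Q := by ring
    linarith
  · rw [← Real.sin_pi_sub]
    apply key
    · have : π * s ≤ π * (1 - 1/Q) := by gcongr
      have h6 : π * (1 - 1/(Q:ℝ)) = π - π/Q := by ring
      linarith
    · linarith

lemma st2_cos_bound (Q : ℕ) (hQ : 1 < Q) (m : ℤ) (hm : ¬ (Q:ℤ) ∣ m) :
    Real.cos (2 * π * ((m:ℝ) / Q)) ≤ 1 - 8 / (Q:ℝ)^2 := by
  have hQ0 : (0:ℤ) < Q := by exact_mod_cast (by omega : 0 < Q)
  have hQ0' : (0:ℝ) < Q := by exact_mod_cast hQ0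
  set r : ℤ := m % Q with hr
  have hr0 : 0 ≤ r := Int.emod_nonneg m hQ0.ne'
  have hrQ : r < Q := Int.emod_lt_of_pos m hQ0
  have hrne : r ≠ 0 := fun h => hm (Int.dvd_of_emod_eq_zero h)
  have hr1 : 1 ≤ r := lt_of_le_of_ne hr0 (Ne.symm hrne)
  have hid : (m:ℤ) = r + Q * (m / Q) := by rw [hr]; linarith [Int.emod_add_mul_ediv m (Q:ℤ)]
  have hmdecomp : (m:ℝ) = (r:ℝ) + (Q:ℝ) * ((m / Q : ℤ):ℝ) := by exact_mod_cast hid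
  have hcos : Real.cos (2 * π * ((m:ℝ)/Q)) = Real.cos (2 * π * ((r:ℝ)/Q)) := by
    rw [show 2 * π * ((m:ℝ)/Q) = 2 * π * ((r:ℝ)/Q) + (m / Q : ℤ) * (2*π) by
      rw [hmdecomp]; field_simp]
    exact Real.cos_add_int_mul_two_pi _ _
  rw [hcos]
  set s : ℝ := (r:ℝ)/Q with hs
  have hsin : 2/Q ≤ Real.sin (π * s) := by
    apply st2_sin_lb Q hQ
    · have h1r : (1:ℝ) ≤ (r:ℝ) := by exact_mod_cast hr1
      rw [hs]; gcongr
    · have hrQ1 : (r:ℝ) ≤ (Q:ℝ) - 1 := by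
        have : r ≤ (Q:ℤ) - 1 := by omega
        exact_mod_cast this
      have : s ≤ ((Q:ℝ)-1)/Q := by rw [hs]; gcongr
      have h7 : ((Q:ℝ)-1)/Q = 1 - 1/Q := by field_simp
      linarith
  have hcos2 : Real.cos (2 * π * s) = 1 - 2 * Real.sin (π * s)^2 := by
    rw [show 2 * π * s = 2 * (π * s) by ring, Real.cos_two_mul, Real.cos_sq']
    ring
  rw [hcos2]
  have h8 : (2/Q:ℝ)^2 ≤ Real.sin (π*s)^2 := by
    apply sq_le_sq' _ hsin
    have : (0:ℝ) < 2/Q := by positivity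
    linarith
  have h9 : (2/(Q:ℝ))^2 = 4/Q^2 := by field_simp; ring
  rw [h9] at h8
  have h10 : (8:ℝ)/(Q:ℝ)^2 = 2*(4/(Q:ℝ)^2) := by ring
  linarith


section st2aux
variable (μ : ℤ → ℝ)

lemma st2_termnorm (hnonneg : ∀ a, 0 ≤ μ a) (a : ℤ) (x : ℝ) :
    ‖(μ a : ℂ) * st2e x‖ = μ a := by
  rw [norm_mul, st2e_norm, mul_one, Complex.norm_real, Real.norm_of_nonneg (hnonneg a)]

lemma st2_summF (hnonneg : ∀ a, 0 ≤ μ a) (hsummable : Summable μ) (f : ℤ → ℝ) :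
    Summable (fun a : ℤ => (μ a : ℂ) * st2e (f a)) := by
  apply Summable.of_norm
  simp only [st2_termnorm μ hnonneg]
  exact hsummable

lemma st2_inversion (hnonneg : ∀ a, 0 ≤ μ a) (hsummable : Summable μ)
    (Q : ℕ) (hQ : 0 < Q) (c : ℤ) :
    ∑ j ∈ Finset.range Q, (∑' a : ℤ, (μ a : ℂ) * st2e (a * ((j:ℝ) / Q))) * st2e (-(c * j / Q))
      = (Q:ℂ) * ((∑' a : ℤ, if (Q:ℤ) ∣ (a - c) then μ a else 0 : ℝ) : ℂ) := by
  have hstep : ∀ j ∈ Finset.range Q,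
      (∑' a : ℤ, (μ a : ℂ) * st2e (a * ((j:ℝ) / Q))) * st2e (-(c * j / Q))
      = ∑' a : ℤ, (μ a : ℂ) * st2e (((a - c : ℤ):ℝ) * j / Q) := by
    intro j _
    rw [← tsum_mul_right]
    apply tsum_congr
    intro a
    rw [mul_assoc, ← st2e_add]
    congr 1
    push_cast
    ring
  rw [Finset.sum_congr rfl hstep, ← Summable.tsum_finsetSum (fun j _ => st2_summF μ hnonneg hsummable _)]
  have h2 : ∀ a : ℤ, ∑ j ∈ Finset.range Q, (μ a : ℂ) * st2e (((a-c:ℤ):ℝ) * j / Q)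
      = (Q:ℂ) * (if (Q:ℤ) ∣ (a - c) then ((μ a:ℝ):ℂ) else 0) := by
    intro a
    rw [← Finset.mul_sum, st2e_geom Q hQ (a - c)]
    split_ifs <;> ring
  rw [tsum_congr h2, tsum_mul_left]
  congr 1
  rw [Complex.ofReal_tsum]
  exact tsum_congr fun a => by split_ifs <;> simp

lemma st2_normsq (hnonneg : ∀ a, 0 ≤ μ a) (hsummable : Summable μ) (θ : ℝ) :
    ‖∑' a : ℤ, (μ a:ℂ) * st2e (a * θ)‖^2
      = ∑' p : ℤ × ℤ, μ p.1 * μ p.2 * Real.cos (2 * π * (((p.1 - p.2 : ℤ):ℝ) * θ)) := by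
  set z := ∑' a : ℤ, (μ a:ℂ) * st2e (a * θ) with hz
  have hnorm1 : Summable (fun a : ℤ => ‖(μ a:ℂ) * st2e (a * θ)‖) := by
    simp only [st2_termnorm μ hnonneg]; exact hsummable
  have hnorm2 : Summable (fun b : ℤ => ‖(μ b:ℂ) * st2e (-(b * θ))‖) := by
    simp only [st2_termnorm μ hnonneg]; exact hsummable
  have hconj : (starRingEnd ℂ) z = ∑' b : ℤ, (μ b:ℂ) * st2e (-(b * θ)) := by
    rw [hz]
    rw [show (starRingEnd ℂ) (∑' (a : ℤ), (μ a:ℂ) * st2e (↑a * θ))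
        = star (∑' (a : ℤ), (μ a:ℂ) * st2e (↑a * θ)) from rfl, tsum_star]
    apply tsum_congr
    intro b
    rw [show star ((μ b:ℂ) * st2e (↑b * θ)) = (starRingEnd ℂ) ((μ b:ℂ) * st2e (↑b * θ)) from rfl]
    rw [map_mul, st2e_conj, Complex.conj_ofReal]
  have hpairsum : Summable (fun p : ℤ × ℤ =>
      ((μ p.1:ℂ) * st2e (p.1 * θ)) * ((μ p.2:ℂ) * st2e (-(p.2 * θ)))) := by
    apply Summable.of_norm
    have : ∀ p : ℤ × ℤ, ‖((μ p.1:ℂ) * st2e (p.1 * θ)) * ((μ p.2:ℂ) * st2e (-(p.2 * θ)))‖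
        = μ p.1 * μ p.2 := by
      intro p
      rw [norm_mul, st2_termnorm μ hnonneg, st2_termnorm μ hnonneg]
    simp only [this]
    exact hsummable.mul_of_nonneg hsummable hnonneg hnonneg
  have hmul : z * (starRingEnd ℂ) z = ∑' p : ℤ × ℤ,
      ((μ p.1:ℂ) * st2e (p.1 * θ)) * ((μ p.2:ℂ) * st2e (-(p.2 * θ))) := by
    rw [hconj, hz]
    exact tsum_mul_tsum_of_summable_norm hnorm1 hnorm2
  have hsq : ‖z‖^2 = (z * (starRingEnd ℂ) z).re := by
    rw [Complex.mul_conj, Complex.ofReal_re, Complex.normSq_eq_norm_sq]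
  rw [hsq, hmul, Complex.re_tsum hpairsum]
  apply tsum_congr
  intro p
  have hterm : ((μ p.1:ℂ) * st2e (p.1 * θ)) * ((μ p.2:ℂ) * st2e (-(p.2 * θ)))
      = ((μ p.1 * μ p.2 : ℝ) : ℂ) * st2e (((p.1 - p.2 : ℤ):ℝ) * θ) := by
    rw [show ((p.1 - p.2 : ℤ):ℝ) * θ = p.1 * θ + (-(p.2 * θ)) by push_cast; ring, st2e_add]
    push_cast
    ring
  rw [hterm]
  rw [show (((μ p.1 * μ p.2 : ℝ) : ℂ) * st2e (((p.1 - p.2 : ℤ):ℝ) * θ)).re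
      = (μ p.1 * μ p.2) * (st2e (((p.1 - p.2 : ℤ):ℝ) * θ)).re by simp, st2e_re]

lemma st2_S1 (hnonneg : ∀ a, 0 ≤ μ a) (hsummable : Summable μ) (htotal : ∑' a : ℤ, μ a = 1)
    (Q : ℕ)
    (hmass : ∀ c : ℤ, (∑' a : ℤ, if (Q:ℤ) ∣ (a - c) then μ a else 0) ≤ 1 / Real.sqrt Q) :
    ∑' p : ℤ × ℤ, (if (Q:ℤ) ∣ (p.1 - p.2) then μ p.1 * μ p.2 else 0) ≤ 1 / Real.sqrt Q := by
  have hsum2 : Summable (fun p : ℤ × ℤ => μ p.1 * μ p.2) :=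
    hsummable.mul_of_nonneg hsummable hnonneg hnonneg
  have hind : Summable (fun p : ℤ × ℤ => if (Q:ℤ) ∣ (p.1 - p.2) then μ p.1 * μ p.2 else 0) := by
    apply Summable.of_nonneg_of_le _ _ hsum2
    · intro p; split_ifs; · exact mul_nonneg (hnonneg _) (hnonneg _)
      · exact le_refl 0
    · intro p; split_ifs; · exact le_refl _
      · exact mul_nonneg (hnonneg _) (hnonneg _)
  rw [Summable.tsum_prod' hind (fun a => by
    apply Summable.of_nonneg_of_le _ _ (hsummable.mul_left (μ a))
    · intro b; split_ifs; · exact mul_nonneg (hnonneg _) (hnonneg _)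
      · exact le_refl 0
    · intro b; split_ifs; · exact le_refl _
      · exact mul_nonneg (hnonneg _) (hnonneg _))]
  have hinner : ∀ a : ℤ, ∑' b : ℤ, (if (Q:ℤ) ∣ (a - b) then μ a * μ b else 0)
      = μ a * ∑' b : ℤ, (if (Q:ℤ) ∣ (b - a) then μ b else 0) := by
    intro a
    rw [← tsum_mul_left]
    apply tsum_congr
    intro b
    by_cases h : (Q:ℤ) ∣ b - a
    · rw [if_pos (dvd_sub_comm.mpr h), if_pos h]
    · rw [if_neg (fun hc => h (dvd_sub_comm.mp hc)), if_neg h, mul_zero]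
  simp only [hinner]
  have hle : ∀ a : ℤ, μ a * (∑' b : ℤ, if (Q:ℤ) ∣ (b - a) then μ b else 0)
      ≤ μ a * (1 / Real.sqrt Q) := fun a =>
    mul_le_mul_of_nonneg_left (hmass a) (hnonneg a)
  calc ∑' a : ℤ, μ a * (∑' b : ℤ, if (Q:ℤ) ∣ (b - a) then μ b else 0)
      ≤ ∑' a : ℤ, μ a * (1 / Real.sqrt Q) := by
        apply Summable.tsum_le_tsum hle _ (hsummable.mul_right _)
        apply Summable.of_nonneg_of_le _ hle (hsummable.mul_right _)
        intro a
        apply mul_nonneg (hnonneg a)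
        apply tsum_nonneg
        intro b; split_ifs; exacts [hnonneg b, le_refl 0]
    _ = 1 / Real.sqrt Q := by rw [tsum_mul_right, htotal, one_mul]

end st2aux

lemma st2e_unfold (x : ℝ) : st2e x = Complex.exp ((2 * Real.pi * x : ℝ) * Complex.I) := rfl

set_option maxHeartbeats 1000000 in
/-- Let `P > 1` and `μ` a probability measure on `ℤ`, with Fourier transform
`μ̂(θ) = ∑_a μ(a) e(aθ)`. If for every factorization `QR = P` with `Q > 1` and every
`ℓ`, one has `(1/√Q) ∑_{k mod Q} |μ̂(k/Q + ℓ/R)| ≤ 1` (i.e. `α ≤ 1`), then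
`|μ̂(k/P)| ≤ 1 - 1/P²` for all `k ≢ 0 (mod P)` (i.e. `β ≤ 1 - 1/P²`). -/
theorem stmt_2 (P : ℕ) (hP : 1 < P) (μ : ℤ → ℝ)
    (hnonneg : ∀ a, 0 ≤ μ a) (hsummable : Summable μ)
    (htotal : ∑' a : ℤ, μ a = 1)
    (hα : ∀ Q R : ℕ, Q * R = P → 1 < Q → ∀ ℓ : ℤ,
      (1 / Real.sqrt Q) * ∑ k ∈ Finset.range Q,
        ‖∑' a : ℤ, (μ a : ℂ) *
            Complex.exp (2 * Real.pi * Complex.I *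
              ((a : ℂ) * ((k : ℂ) / Q + (ℓ : ℂ) / R)))‖ ≤ 1) :
    ∀ k : ℤ, ¬ ((P : ℤ) ∣ k) →
      ‖∑' a : ℤ, (μ a : ℂ) *
          Complex.exp (2 * Real.pi * Complex.I * ((a : ℂ) * ((k : ℂ) / P)))‖
        ≤ 1 - 1 / (P : ℝ) ^ 2 := by
  intro k hk
  have hP0 : 0 < P := by omega
  set g : ℕ := Int.gcd k (P:ℤ) with hg
  have hgpos : 0 < g := Int.gcd_pos_iff.mpr (Or.inr (by exact_mod_cast hP0.ne'))
  have hgdvdP : (g:ℤ) ∣ (P:ℤ) := Int.gcd_dvd_right _ _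
  have hgdvdPn : g ∣ P := by exact_mod_cast hgdvdP
  set Q : ℕ := P / g with hQdef
  have hQR : Q * g = P := Nat.div_mul_cancel hgdvdPn
  have hQpos : 0 < Q := Nat.div_pos (Nat.le_of_dvd hP0 hgdvdPn) hgpos
  have hQ1 : 1 < Q := by
    rcases Nat.lt_or_ge Q 2 with h | h
    · exfalso
      have hQ1' : Q = 1 := by omega
      have hgP : g = P := by rwa [hQ1', one_mul] at hQR
      apply hk
      have h2 : (g:ℤ) ∣ k := Int.gcd_dvd_left _ _
      rwa [hgP] at h2
    · omega
  set k' : ℤ := k / (g:ℤ) with hk'def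
  have hkk : (g:ℤ) * k' = k := Int.mul_ediv_cancel' (Int.gcd_dvd_left _ _)
  have hQint : (Q:ℤ) = (P:ℤ) / (g:ℤ) := by
    have hqg : (Q:ℤ) * (g:ℤ) = (P:ℤ) := by exact_mod_cast hQR
    rw [← hqg, Int.mul_ediv_cancel _ (by exact_mod_cast hgpos.ne')]
  have hcop : Int.gcd k' (Q:ℤ) = 1 := by
    rw [hk'def, hQint, hg]
    exact Int.gcd_div_gcd_div_gcd (by exact_mod_cast hgpos)
  have hcopQ : IsCoprime (Q:ℤ) k' :=
    Int.isCoprime_iff_gcd_eq_one.mpr (by rw [Int.gcd_comm]; exact hcop)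
  -- real-number relation between k/P and k'/Q
  have hQposR : (0:ℝ) < Q := by positivity
  have hgposR : (0:ℝ) < g := by positivity
  have hPposR : (0:ℝ) < P := by positivity
  have hkR : (k:ℝ) = (g:ℝ) * (k':ℝ) := by exact_mod_cast hkk.symm
  have hPR : (P:ℝ) = (Q:ℝ) * (g:ℝ) := by exact_mod_cast hQR.symm
  have hkP : (k:ℝ) / (P:ℝ) = (k':ℝ) / (Q:ℝ) := by
    rw [hkR, hPR]
    field_simp
  -- √Q facts
  have hsqrtQ : (0:ℝ) < Real.sqrt Q := Real.sqrt_pos.mpr hQposR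
  have hQ2 : (2:ℝ) ≤ (Q:ℝ) := by exact_mod_cast hQ1
  have hsqrt43 : (4/3:ℝ) ≤ Real.sqrt Q := by
    apply (Real.le_sqrt (by norm_num) (by positivity)).mpr
    nlinarith
  -- bound on ∑ ‖F(j/Q)‖ from hα
  have halpha := hα Q g hQR hQ1 0
  have heq : ∀ j ∈ Finset.range Q,
      ‖∑' a : ℤ, (μ a : ℂ) * Complex.exp (2 * Real.pi * Complex.I *
          ((a : ℂ) * ((j : ℂ) / Q + ((0:ℤ) : ℂ) / g)))‖
      = ‖∑' a : ℤ, (μ a:ℂ) * st2e (a * ((j:ℝ)/Q))‖ := by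
    intro j _
    congr 1
    apply tsum_congr
    intro a
    rw [st2e_unfold]
    congr 1
    push_cast
    ring
  rw [Finset.sum_congr rfl heq] at halpha
  have hFsum : ∑ j ∈ Finset.range Q, ‖∑' a : ℤ, (μ a:ℂ) * st2e (a * ((j:ℝ)/Q))‖
      ≤ Real.sqrt Q := by
    have h2 := mul_le_mul_of_nonneg_left halpha hsqrtQ.le
    have h3 : Real.sqrt Q * (1 / Real.sqrt Q *
        ∑ j ∈ Finset.range Q, ‖∑' a : ℤ, (μ a:ℂ) * st2e (a * ((j:ℝ)/Q))‖)
        = ∑ j ∈ Finset.range Q, ‖∑' a : ℤ, (μ a:ℂ) * st2e (a * ((j:ℝ)/Q))‖ := by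
      field_simp
    rw [h3, mul_one] at h2
    exact h2
  -- mass bound
  have hmass : ∀ c : ℤ, (∑' a : ℤ, if (Q:ℤ) ∣ (a - c) then μ a else 0) ≤ 1 / Real.sqrt Q := by
    intro c
    have hinv := st2_inversion μ hnonneg hsummable Q hQpos c
    have hmassnn : 0 ≤ ∑' a : ℤ, (if (Q:ℤ) ∣ (a - c) then μ a else 0) :=
      tsum_nonneg (fun a => by split_ifs; exacts [hnonneg a, le_refl 0])
    have hnormle : ‖∑ j ∈ Finset.range Q,
        (∑' a : ℤ, (μ a:ℂ) * st2e (a * ((j:ℝ)/Q))) * st2e (-(c * j / Q))‖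
        ≤ ∑ j ∈ Finset.range Q, ‖∑' a : ℤ, (μ a:ℂ) * st2e (a * ((j:ℝ)/Q))‖ := by
      refine le_trans (norm_sum_le _ _) ?_
      apply Finset.sum_le_sum
      intro j _
      rw [norm_mul, st2e_norm, mul_one]
    rw [hinv, norm_mul, Complex.norm_natCast, Complex.norm_real,
      Real.norm_of_nonneg hmassnn] at hnormle
    have hQmass : (Q:ℝ) * (∑' a : ℤ, if (Q:ℤ) ∣ (a - c) then μ a else 0) ≤ Real.sqrt Q :=
      le_trans hnormle hFsum
    rw [le_div_iff₀ hsqrtQ]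
    have hsq : Real.sqrt Q * Real.sqrt Q = (Q:ℝ) := Real.mul_self_sqrt hQposR.le
    nlinarith [hQmass, hmassnn, hsqrtQ]
  -- S1 bound
  have hS1 := st2_S1 μ hnonneg hsummable htotal Q hmass
  have hS1le : ∑' p : ℤ × ℤ, (if (Q:ℤ) ∣ (p.1 - p.2) then μ p.1 * μ p.2 else 0) ≤ 3/4 := by
    refine le_trans hS1 ?_
    calc 1 / Real.sqrt Q ≤ 1 / (4/3:ℝ) := one_div_le_one_div_of_le (by norm_num) hsqrt43
      _ = 3/4 := by norm_num
  -- rewrite goal in st2e form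
  have hgoal : (∑' a : ℤ, (μ a : ℂ) *
      Complex.exp (2 * Real.pi * Complex.I * ((a : ℂ) * ((k : ℂ) / P))))
      = ∑' a : ℤ, (μ a:ℂ) * st2e (a * ((k:ℝ)/(P:ℝ))) := by
    apply tsum_congr
    intro a
    rw [st2e_unfold]
    congr 1
    push_cast
    ring
  rw [hgoal]
  -- summability facts
  have hsum2 : Summable (fun p : ℤ × ℤ => μ p.1 * μ p.2) :=
    hsummable.mul_of_nonneg hsummable hnonneg hnonneg
  have hindsum : Summable (fun p : ℤ × ℤ => if (Q:ℤ) ∣ (p.1 - p.2) then μ p.1 * μ p.2 else 0) := by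
    apply Summable.of_nonneg_of_le _ _ hsum2
    · intro p; split_ifs
      exacts [mul_nonneg (hnonneg _) (hnonneg _), le_refl 0]
    · intro p; split_ifs
      exacts [le_refl _, mul_nonneg (hnonneg _) (hnonneg _)]
  have hindc : Summable (fun p : ℤ × ℤ => if (Q:ℤ) ∣ (p.1 - p.2) then 0 else μ p.1 * μ p.2) := by
    apply Summable.of_nonneg_of_le _ _ hsum2
    · intro p; split_ifs
      exacts [le_refl 0, mul_nonneg (hnonneg _) (hnonneg _)]
    · intro p; split_ifs
      exacts [mul_nonneg (hnonneg _) (hnonneg _), le_refl _]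
  have hnormμ : Summable (fun a : ℤ => ‖μ a‖) := by
    have : (fun a : ℤ => ‖μ a‖) = μ := funext fun a => Real.norm_of_nonneg (hnonneg a)
    rw [this]; exact hsummable
  have hT0 : ∑' p : ℤ × ℤ, μ p.1 * μ p.2 = 1 := by
    rw [← tsum_mul_tsum_of_summable_norm hnormμ hnormμ, htotal, one_mul]
  -- pointwise bound
  have hpoint : ∀ p : ℤ × ℤ,
      μ p.1 * μ p.2 * Real.cos (2*π*(((p.1 - p.2 : ℤ):ℝ) * ((k:ℝ)/(P:ℝ))))
      ≤ μ p.1 * μ p.2 - (8/(Q:ℝ)^2) * (if (Q:ℤ) ∣ (p.1 - p.2) then 0 else μ p.1 * μ p.2) := by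
    intro p
    have hμμ : 0 ≤ μ p.1 * μ p.2 := mul_nonneg (hnonneg _) (hnonneg _)
    by_cases h : (Q:ℤ) ∣ (p.1 - p.2)
    · rw [if_pos h, mul_zero, sub_zero]
      exact mul_le_of_le_one_right hμμ (Real.cos_le_one _)
    · rw [if_neg h]
      have harg : ((p.1 - p.2 : ℤ):ℝ) * ((k:ℝ)/(P:ℝ)) = (((p.1 - p.2)*k' : ℤ):ℝ)/(Q:ℝ) := by
        rw [hkP]; push_cast; ring
      have hnd : ¬ (Q:ℤ) ∣ ((p.1 - p.2)*k') := fun hc => h (hcopQ.dvd_of_dvd_mul_right hc)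
      have hcb := st2_cos_bound Q hQ1 _ hnd
      rw [harg]
      calc μ p.1 * μ p.2 * Real.cos (2*π*((((p.1 - p.2)*k' : ℤ):ℝ)/(Q:ℝ)))
          ≤ μ p.1 * μ p.2 * (1 - 8/(Q:ℝ)^2) := mul_le_mul_of_nonneg_left hcb hμμ
        _ = μ p.1 * μ p.2 - (8/(Q:ℝ)^2) * (μ p.1 * μ p.2) := by ring
  have hf_summ : Summable (fun p : ℤ × ℤ =>
      μ p.1 * μ p.2 * Real.cos (2*π*(((p.1 - p.2 : ℤ):ℝ) * ((k:ℝ)/(P:ℝ))))) := by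
    apply Summable.of_norm_bounded hsum2
    intro p
    rw [Real.norm_eq_abs, abs_mul]
    have h1 : |μ p.1 * μ p.2| = μ p.1 * μ p.2 :=
      abs_of_nonneg (mul_nonneg (hnonneg _) (hnonneg _))
    rw [h1]
    have h2 : |Real.cos (2*π*(((p.1 - p.2 : ℤ):ℝ) * ((k:ℝ)/(P:ℝ))))| ≤ 1 := Real.abs_cos_le_one _
    nlinarith [mul_nonneg (hnonneg p.1) (hnonneg p.2)]
  -- the complement sum
  have hcompl : ∑' p : ℤ × ℤ, (if (Q:ℤ) ∣ (p.1 - p.2) then (0:ℝ) else μ p.1 * μ p.2)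
      = 1 - ∑' p : ℤ × ℤ, (if (Q:ℤ) ∣ (p.1 - p.2) then μ p.1 * μ p.2 else 0) := by
    have hpt : ∀ p : ℤ × ℤ, (if (Q:ℤ) ∣ (p.1 - p.2) then (0:ℝ) else μ p.1 * μ p.2)
        = μ p.1 * μ p.2 - (if (Q:ℤ) ∣ (p.1 - p.2) then μ p.1 * μ p.2 else 0) := by
      intro p; split_ifs <;> ring
    rw [tsum_congr hpt, Summable.tsum_sub hsum2 hindsum, hT0]
  have hsumg : ∑' p : ℤ × ℤ, (μ p.1 * μ p.2
        - (8/(Q:ℝ)^2) * (if (Q:ℤ) ∣ (p.1 - p.2) then (0:ℝ) else μ p.1 * μ p.2))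
      = 1 - (8/(Q:ℝ)^2) * (1 - ∑' p : ℤ × ℤ,
          (if (Q:ℤ) ∣ (p.1 - p.2) then μ p.1 * μ p.2 else 0)) := by
    rw [Summable.tsum_sub hsum2 (hindc.mul_left _), hT0, tsum_mul_left, hcompl]
  have hF2 := st2_normsq μ hnonneg hsummable ((k:ℝ)/(P:ℝ))
  have hchain : ‖∑' a : ℤ, (μ a:ℂ) * st2e (a * ((k:ℝ)/(P:ℝ)))‖^2
      ≤ 1 - (8/(Q:ℝ)^2) * (1 - ∑' p : ℤ × ℤ,
          (if (Q:ℤ) ∣ (p.1 - p.2) then μ p.1 * μ p.2 else 0)) := by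
    rw [hF2, ← hsumg]
    exact Summable.tsum_le_tsum hpoint hf_summ (hsum2.sub (hindc.mul_left _))
  -- numeric finish
  have hQleP : Q ≤ P := hQdef ▸ Nat.div_le_self P g
  have hQlePR : (Q:ℝ) ≤ (P:ℝ) := by exact_mod_cast hQleP
  have h81 : 8/(P:ℝ)^2 ≤ 8/(Q:ℝ)^2 := by gcongr
  have h8 : 8/(P:ℝ)^2 * (1/4) ≤ 8/(Q:ℝ)^2 * (1 - ∑' p : ℤ × ℤ,
      (if (Q:ℤ) ∣ (p.1 - p.2) then μ p.1 * μ p.2 else 0)) := by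
    apply mul_le_mul h81 (by linarith) (by norm_num) (by positivity)
  have hfinal2 : ‖∑' a : ℤ, (μ a:ℂ) * st2e (a * ((k:ℝ)/(P:ℝ)))‖^2 ≤ 1 - 2/(P:ℝ)^2 := by
    have hrr : 8/(P:ℝ)^2 * (1/4) = 2/(P:ℝ)^2 := by ring
    linarith
  have hP2 : (2:ℝ) ≤ (P:ℝ) := by exact_mod_cast hP
  have hc : 0 ≤ 1 - 1/(P:ℝ)^2 := by
    have h4 : (4:ℝ) ≤ (P:ℝ)^2 := by nlinarith
    have : 1/(P:ℝ)^2 ≤ 1/4 := one_div_le_one_div_of_le (by norm_num) h4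
    linarith
  have hx : (0:ℝ) ≤ ‖∑' a : ℤ, (μ a:ℂ) * st2e (a * ((k:ℝ)/(P:ℝ)))‖ := norm_nonneg _
  have hxc : ‖∑' a : ℤ, (μ a:ℂ) * st2e (a * ((k:ℝ)/(P:ℝ)))‖^2 ≤ (1 - 1/(P:ℝ)^2)^2 := by
    have hexp : (1 - 1/(P:ℝ)^2)^2 = 1 - 2/(P:ℝ)^2 + (1/(P:ℝ)^2)^2 := by ring
    linarith [sq_nonneg (1/(P:ℝ)^2)]
  calc ‖∑' a : ℤ, (μ a:ℂ) * st2e (a * ((k:ℝ)/(P:ℝ)))‖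
      = Real.sqrt (‖∑' a : ℤ, (μ a:ℂ) * st2e (a * ((k:ℝ)/(P:ℝ)))‖^2) := (Real.sqrt_sq hx).symm
    _ ≤ Real.sqrt ((1 - 1/(P:ℝ)^2)^2) := Real.sqrt_le_sqrt hxc
    _ = 1 - 1/(P:ℝ)^2 := Real.sqrt_sq hc
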